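/- Let G be a finite connected simple graph and let P be a non-trivial isometric path in G that is bypath-free in G. Then for every vertex v of G not on P, the wide shadow S_P(v) contains at least two vertices. -/

import Mathlib

/-- `p : Fin n → V` is an isometric path in `G` if the distance in `G` between the
`i`-th and `j`-th vertices equals `|i - j|`. -/
def IsIsometricPath {V : Type*} (G : SimpleGraph V) {n : ℕ} (p : Fin n → V) : Prop :=
  ∀ i j : Fin n, G.dist (p i) (p j) = ((i : ℤ) - (j : ℤ)).natAbs

/-- The wide shadow `S_P(v)` of a vertex `v` on the path `p`: all vertices `y` of `p`
with `d_G(y,x) ≤ d_G(v,x)` for every vertex `x` of `p`. -/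
def pathWideShadow {V : Type*} (G : SimpleGraph V) {n : ℕ} (p : Fin n → V) (v : V) :
    Set V :=
  {y | (∃ a, p a = y) ∧ ∀ b : Fin n, G.dist y (p b) ≤ G.dist v (p b)}

/-- The path obtained from `p` by replacing its segment between indices `i` and `j`
with the path `b`. -/
def replaceSeg {V : Type*} {k t : ℕ} (p : Fin k → V) (b : Fin t → V) (i j : Fin k) :
    Fin ((i : ℕ) + t + (k - 1 - (j : ℕ))) → V := fun m =>
  if h1 : (m : ℕ) < (i : ℕ) then p ⟨m, lt_trans h1 i.isLt⟩
  else if h2 : (m : ℕ) < (i : ℕ) + t then b ⟨(m : ℕ) - (i : ℕ), by omega⟩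
  else p ⟨(m : ℕ) - ((i : ℕ) + t) + (j : ℕ) + 1, by
    have hm := m.isLt; have hj := j.isLt; omega⟩

/-- `b` (a path on `t + 3 ≥ 3` vertices) is a bypath of the isometric path `p` with
branching vertices `p i` and `p j`: `b` is a path from `p i` to `p j` meeting `p`
only in those two vertices, and replacing the segment of `p` from `i` to `j` by `b`
again yields an isometric path in `G`. -/
def IsBypathAt {V : Type*} (G : SimpleGraph V) {k t : ℕ} (p : Fin k → V)
    (b : Fin (t + 3) → V) (i j : Fin k) : Prop :=
  i < j ∧ Function.Injective b ∧
  (∀ m : Fin (t + 2), G.Adj (b m.castSucc) (b m.succ)) ∧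
  b 0 = p i ∧ b (Fin.last (t + 2)) = p j ∧
  Set.range b ∩ Set.range p = {p i, p j} ∧
  IsIsometricPath G (replaceSeg p b i j)

/-- `p` is bypath-free in `G` if `G` contains no bypath of `p`. -/
def BypathFree {V : Type*} (G : SimpleGraph V) {k : ℕ} (p : Fin k → V) : Prop :=
  ∀ (t : ℕ) (b : Fin (t + 3) → V) (i j : Fin k), ¬ IsBypathAt G p b i j

/-- if `P` is a non-trivial isometric path in `G` (at least 3 vertices)
which is bypath-free in `G`, then for every vertex `v` not on `P`, the wide shadow
`S_P(v)` contains at least two vertices. -/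
private lemma walk_getVert_walk {V : Type*} {G : SimpleGraph V} :
    ∀ {u w : V} (W : G.Walk u w) (m m' : ℕ), m ≤ m' →
      ∃ Q : G.Walk (W.getVert m) (W.getVert m'), Q.length ≤ m' - m := by
  intro u w W
  induction W with
  | nil => intro m m' _; exact ⟨SimpleGraph.Walk.nil, by simp⟩
  | @cons a b c h q ih =>
    intro m m' hm
    match m, m' with
    | 0, 0 => exact ⟨SimpleGraph.Walk.nil, by simp⟩
    | 0, (n+1) =>
      obtain ⟨Q, hQ⟩ := ih 0 n (Nat.zero_le n)
      exact ⟨SimpleGraph.Walk.cons h (Q.copy (SimpleGraph.Walk.getVert_zero q) rfl),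
        by show (Q.copy (SimpleGraph.Walk.getVert_zero q) rfl).length + 1 ≤ n + 1 - 0
           rw [SimpleGraph.Walk.length_copy]; omega⟩
    | (a'+1), (b'+1) =>
      obtain ⟨Q, hQ⟩ := ih a' b' (by omega)
      exact ⟨Q, by rw [Nat.add_sub_add_right]; exact hQ⟩

private lemma dist_getVert_le' {V : Type*} {G : SimpleGraph V} {u w : V} (W : G.Walk u w)
    {m m' : ℕ} (h : m ≤ m') : G.dist (W.getVert m) (W.getVert m') ≤ m' - m := by
  obtain ⟨Q, hQ⟩ := walk_getVert_walk W m m' h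
  exact le_trans (SimpleGraph.dist_le Q) hQ

private lemma key_lemma {V : Type*} [Fintype V] (G : SimpleGraph V)
    (hG : G.Connected) {k : ℕ} (p : Fin k → V) (hp : IsIsometricPath G p)
    (hk : 3 ≤ k) (hfree : BypathFree G p) (v : V) (hv : v ∉ Set.range p) :
    ∀ a b : Fin k, (a:ℕ) ≤ (b:ℕ) →
      (b:ℕ) - (a:ℕ) + 1 ≤ G.dist v (p a) + G.dist v (p b) := by
  classical
  have hf1 : ∀ b : Fin k, 1 ≤ G.dist v (p b) := by
    intro b
    exact hG.pos_dist_of_ne (fun h => hv ⟨b, h.symm⟩)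
  have htri : ∀ a b : Fin k, G.dist (p a) (p b) ≤ G.dist v (p a) + G.dist v (p b) := by
    intro a b
    calc G.dist (p a) (p b) ≤ G.dist (p a) v + G.dist v (p b) := hG.dist_triangle
    _ = _ := by rw [SimpleGraph.dist_comm]
  by_contra hcon
  push_neg at hcon
  obtain ⟨a, b, hab, hlt⟩ := hcon
  have hex : ∃ d : ℕ, ∃ a b : Fin k, (a:ℕ) < (b:ℕ) ∧ (b:ℕ) - (a:ℕ) = d ∧
      G.dist v (p a) + G.dist v (p b) = d := by
    refine ⟨(b:ℕ) - (a:ℕ), a, b, ?_, rfl, ?_⟩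
    · have h1 := htri a b; have h2 := hp a b
      have := hf1 a; have := hf1 b; omega
    · have h1 := htri a b; have h2 := hp a b; omega
  set n := Nat.find hex with hn
  obtain ⟨i, j, hij, hji, hsum⟩ := Nat.find_spec hex
  have hmin : ∀ d, d < n → ¬ (∃ a b : Fin k, (a:ℕ) < (b:ℕ) ∧ (b:ℕ) - (a:ℕ) = d ∧
      G.dist v (p a) + G.dist v (p b) = d) := fun d hd => Nat.find_min hex hd
  have hn2 : 2 ≤ n := by have := hf1 i; have := hf1 j; omega
  obtain ⟨W1, hW1⟩ := hG.exists_walk_length_eq_dist v (p i)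
  obtain ⟨W2, hW2⟩ := hG.exists_walk_length_eq_dist v (p j)
  set Q : G.Walk (p i) (p j) := W1.reverse.append W2 with hQdef
  have hQlen : Q.length = n := by
    rw [hQdef, SimpleGraph.Walk.length_append, SimpleGraph.Walk.length_reverse, hW1, hW2]
    omega
  have hgv0 : Q.getVert 0 = p i := SimpleGraph.Walk.getVert_zero Q
  have hgvn : Q.getVert n = p j := by rw [← hQlen]; exact SimpleGraph.Walk.getVert_length Q
  have hdij : G.dist (p i) (p j) = n := by have := hp i j; omega
  have hexact : ∀ s, s ≤ n →
      G.dist (p i) (Q.getVert s) = s ∧ G.dist (Q.getVert s) (p j) = n - s := by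
    intro s hs
    have h1 : G.dist (p i) (Q.getVert s) ≤ s := by
      have := dist_getVert_le' Q (Nat.zero_le s)
      rwa [hgv0, Nat.sub_zero] at this
    have h2 : G.dist (Q.getVert s) (p j) ≤ n - s := by
      have := dist_getVert_le' Q hs
      rwa [hgvn] at this
    have h3 : n ≤ G.dist (p i) (Q.getVert s) + G.dist (Q.getVert s) (p j) := by
      calc n = G.dist (p i) (p j) := hdij.symm
      _ ≤ _ := hG.dist_triangle
    exact ⟨by omega, by omega⟩
  have hgv : ∀ s s', s ≤ s' → s' ≤ n →
      G.dist (Q.getVert s) (Q.getVert s') = s' - s := by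
    intro s s' h1 h2
    have hu := dist_getVert_le' Q h1
    have ha := (hexact s (le_trans h1 h2)).1
    have hb := (hexact s' h2).1
    have htr : G.dist (p i) (Q.getVert s') ≤
        G.dist (p i) (Q.getVert s) + G.dist (Q.getVert s) (Q.getVert s') := hG.dist_triangle
    omega
  have hvQ : Q.getVert (G.dist v (p i)) = v := by
    rw [hQdef, SimpleGraph.Walk.getVert_append, SimpleGraph.Walk.length_reverse, hW1]
    simp
  have hfin : G.dist v (p i) ≤ n := by omega
  -- interior of Q avoids p
  have hint : ∀ s, 0 < s → s < n → ∀ a : Fin k, p a ≠ Q.getVert s := by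
    intro s hs0 hsn a ha
    have h1 := (hexact s (le_of_lt hsn)).1
    have h2 := (hexact s (le_of_lt hsn)).2
    rw [← ha] at h1 h2
    have hia := hp i a
    have haj := hp a j
    have hai : (a:ℕ) = (i:ℕ) + s := by omega
    rcases le_or_gt (G.dist v (p i)) s with hcase | hcase
    · have hda : G.dist v (p a) = s - G.dist v (p i) := by
        have := hgv (G.dist v (p i)) s hcase (le_of_lt hsn)
        rwa [hvQ, ← ha] at this
      exact hmin s hsn ⟨i, a, by omega, by omega, by omega⟩
    · have hda : G.dist v (p a) = G.dist v (p i) - s := by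
        have := hgv s (G.dist v (p i)) (le_of_lt hcase) hfin
        rw [hvQ, ← ha] at this
        rwa [SimpleGraph.dist_comm] at this
      exact hmin (n - s) (by omega) ⟨a, j, by omega, by omega, by omega⟩
  have hPG : ∀ c : Fin k, ((c:ℕ) ≤ (i:ℕ) ∨ (j:ℕ) ≤ (c:ℕ)) → ∀ s, s ≤ n →
      G.dist (p c) (Q.getVert s) = ((((i:ℕ) + s : ℕ) : ℤ) - ((c:ℕ) : ℤ)).natAbs := by
    intro c hc s hs
    have h1 := (hexact s hs).1
    have h2 := (hexact s hs).2
    have hci := hp c i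
    have hcj := hp c j
    have hcomm1 : G.dist (Q.getVert s) (p i) = G.dist (p i) (Q.getVert s) :=
      SimpleGraph.dist_comm
    have hcomm2 : G.dist (p j) (Q.getVert s) = G.dist (Q.getVert s) (p j) :=
      SimpleGraph.dist_comm
    have hup1 : G.dist (p c) (Q.getVert s) ≤
        G.dist (p c) (p i) + G.dist (p i) (Q.getVert s) := hG.dist_triangle
    have hup2 : G.dist (p c) (Q.getVert s) ≤
        G.dist (p c) (p j) + G.dist (p j) (Q.getVert s) := hG.dist_triangle
    have hlo1 : G.dist (p c) (p j) ≤
        G.dist (p c) (Q.getVert s) + G.dist (Q.getVert s) (p j) := hG.dist_triangle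
    have hlo2 : G.dist (p c) (p i) ≤
        G.dist (p c) (Q.getVert s) + G.dist (Q.getVert s) (p i) := hG.dist_triangle
    rcases hc with hc | hc <;> omega
  -- construct the bypath
  set t : ℕ := n - 2 with ht
  have htn : t + 2 = n := by omega
  set bfun : Fin (t+3) → V := fun s => Q.getVert (s : ℕ) with hbfun
  have hjin : (j:ℕ) = (i:ℕ) + n := by omega
  apply hfree t bfun i j
  have hspec : ∀ m : Fin ((i:ℕ) + (t+3) + (k - 1 - (j:ℕ))),
      (∃ c : Fin k, ((c:ℕ) ≤ (i:ℕ) ∨ (j:ℕ) ≤ (c:ℕ)) ∧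
        replaceSeg p bfun i j m = p c ∧ (c:ℕ) = (m:ℕ)) ∨
      (∃ s, s ≤ n ∧ replaceSeg p bfun i j m = Q.getVert s ∧ (i:ℕ) + s = (m:ℕ)) := by
    intro m
    have hm := m.isLt
    have hjk := j.isLt
    unfold replaceSeg
    split_ifs with h1 h2
    · exact Or.inl ⟨⟨m, lt_trans h1 i.isLt⟩, Or.inl (by simp; omega), rfl, rfl⟩
    · exact Or.inr ⟨(m:ℕ) - (i:ℕ), by omega, rfl, by omega⟩
    · refine Or.inl ⟨⟨(m:ℕ) - ((i:ℕ) + (t+3)) + (j:ℕ) + 1, by omega⟩,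
        Or.inr (by simp; omega), rfl, by simp; omega⟩
  refine ⟨Fin.lt_def.mpr hij, ?_, ?_, ?_, ?_, ?_, ?_⟩
  · -- injective
    intro s s' hss
    by_contra hne'
    have hvals : (s:ℕ) ≠ (s':ℕ) := fun h => hne' (Fin.ext h)
    have hs := s.isLt
    have hs' := s'.isLt
    have hss' : Q.getVert (s:ℕ) = Q.getVert (s':ℕ) := hss
    rcases Nat.lt_or_ge (s:ℕ) (s':ℕ) with h | h
    · have := hgv (s:ℕ) (s':ℕ) (le_of_lt h) (by omega)
      rw [hss', SimpleGraph.dist_self] at this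
      omega
    · have := hgv (s':ℕ) (s:ℕ) h (by omega)
      rw [hss', SimpleGraph.dist_self] at this
      omega
  · -- adjacency
    intro m
    have hmlt : (m:ℕ) < Q.length := by rw [hQlen]; have := m.isLt; omega
    have := Q.adj_getVert_succ hmlt
    simpa [hbfun] using this
  · show Q.getVert ((0 : Fin (t+3)) : ℕ) = p i
    simp [hgv0]
  · show Q.getVert ((Fin.last (t+2) : Fin (t+3)) : ℕ) = p j
    rw [Fin.val_last, htn]
    exact hgvn
  · -- range intersection
    apply Set.eq_of_subset_of_subset
    · rintro x ⟨⟨s, rfl⟩, a, ha⟩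
      have hs := s.isLt
      rcases Nat.eq_zero_or_pos (s:ℕ) with h0 | h0
      · left
        show Q.getVert ((s:ℕ)) = p i
        rw [h0]; exact hgv0
      · rcases eq_or_lt_of_le (show (s:ℕ) ≤ n by omega) with hsn | hsn
        · right
          show Q.getVert ((s:ℕ)) = p j
          rw [hsn]; exact hgvn
        · exact absurd ha (hint (s:ℕ) h0 hsn a)
    · rintro x (rfl | rfl)
      · exact ⟨⟨0, by simp [hbfun, hgv0]⟩, ⟨i, rfl⟩⟩
      · refine ⟨⟨Fin.last (t+2), ?_⟩, ⟨j, rfl⟩⟩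
        show Q.getVert ((Fin.last (t+2) : Fin (t+3)) : ℕ) = p j
        rw [Fin.val_last, htn]; exact hgvn
  · -- isometric
    intro m m'
    rcases hspec m with ⟨c, hc, he, hcm⟩ | ⟨s, hsn1, he, hsm⟩ <;>
      rcases hspec m' with ⟨c', hc', he', hcm'⟩ | ⟨s', hsn2, he', hsm'⟩
    · rw [he, he']; have := hp c c'; omega
    · rw [he, he']; have := hPG c hc s' hsn2; omega
    · rw [he, he']
      have h1 := hPG c' hc' s hsn1
      have h2 : G.dist (Q.getVert s) (p c') = G.dist (p c') (Q.getVert s) :=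
        SimpleGraph.dist_comm
      omega
    · rw [he, he']
      rcases le_total s s' with h | h
      · have := hgv s s' h hsn2; omega
      · have h1 := hgv s' s h hsn1
        have h2 : G.dist (Q.getVert s) (Q.getVert s') = G.dist (Q.getVert s') (Q.getVert s) :=
          SimpleGraph.dist_comm
        omega

theorem bypathFree_wideShadow_two {V : Type*} [Fintype V] (G : SimpleGraph V)
    (hG : G.Connected) {k : ℕ} (p : Fin k → V) (hp : IsIsometricPath G p)
    (hk : 3 ≤ k) (hfree : BypathFree G p) (v : V) (hv : v ∉ Set.range p) :
    ∃ y z, y ≠ z ∧ y ∈ pathWideShadow G p v ∧ z ∈ pathWideShadow G p v := by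
  classical
  have key : ∀ a b : Fin k, (a:ℕ) ≤ (b:ℕ) →
      (b:ℕ) - (a:ℕ) + 1 ≤ G.dist v (p a) + G.dist v (p b) :=
    key_lemma G hG p hp hk hfree v hv
  have hf1 : ∀ b : Fin k, 1 ≤ G.dist v (p b) := by
    intro b
    exact hG.pos_dist_of_ne (fun h => hv ⟨b, h.symm⟩)
  have hne : (Finset.univ : Finset (Fin k)).Nonempty := ⟨⟨0, by omega⟩, Finset.mem_univ _⟩
  set A : ℤ := Finset.univ.sup' hne (fun b : Fin k => (b:ℕ) - (G.dist v (p b) : ℤ)) with hA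
  have hA1 : ∀ b : Fin k, ((b:ℕ) : ℤ) - (G.dist v (p b) : ℤ) ≤ A := by
    intro b
    rw [hA]
    exact Finset.le_sup' (fun b : Fin k => (b:ℕ) - (G.dist v (p b) : ℤ)) (Finset.mem_univ b)
  have hA2 : A ≤ (k : ℤ) - 2 := by
    apply Finset.sup'_le
    intro b _
    have := hf1 b
    have := b.isLt
    omega
  set a0 : ℕ := A.toNat with ha0
  have ha0k : a0 + 1 < k := by omega
  have hA3 : ∀ b : Fin k, (a0:ℤ) + 1 ≤ (b:ℕ) + (G.dist v (p b) : ℤ) := by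
    intro b
    obtain ⟨c, _, hc⟩ := Finset.exists_mem_eq_sup' hne
      (fun b : Fin k => (b:ℕ) - (G.dist v (p b) : ℤ))
    rw [← hA] at hc
    have hfb := hf1 b
    have hfc := hf1 c
    rcases le_total (b:ℕ) (c:ℕ) with hbc | hbc
    · have := key b c hbc
      omega
    · omega
  have a1lt : a0 < k := by omega
  refine ⟨p ⟨a0, a1lt⟩, p ⟨a0 + 1, ha0k⟩, ?_, ?_, ?_⟩
  · intro h
    have h1 := hp ⟨a0, a1lt⟩ ⟨a0 + 1, ha0k⟩
    rw [h, SimpleGraph.dist_self] at h1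
    simp only [Fin.val_mk] at h1
    omega
  · refine ⟨⟨_, rfl⟩, fun b => ?_⟩
    have h1 := hp ⟨a0, a1lt⟩ b
    have h2 := hA1 b
    have h3 := hA3 b
    simp only [Fin.val_mk] at h1
    omega
  · refine ⟨⟨_, rfl⟩, fun b => ?_⟩
    have h1 := hp ⟨a0 + 1, ha0k⟩ b
    have h2 := hA1 b
    have h3 := hA3 b
    simp only [Fin.val_mk] at h1
    omega
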